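/- Let r ≥ 1 and k ≥ 1 be integers, and let E_1, …, E_{2k} be independent random variables each uniformly distributed on Z_{±r}. Let Ȳ = (1/k) · (E_1 + ⋯ + E_{2k}). Then Pr(|Ȳ| < 1/2) ≥ 1 − 8r(r+1)/(3k). -/

import Mathlib

open MeasureTheory ProbabilityTheory
open scoped ENNReal

lemma Icc_succ' (n : ℕ) :
    Finset.Icc (-((n:ℤ)+1)) ((n:ℤ)+1) =
      insert (-((n:ℤ)+1)) (insert ((n:ℤ)+1) (Finset.Icc (-(n:ℤ)) n)) := by
  ext x; simp only [Finset.mem_Icc, Finset.mem_insert]; omega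

lemma sum_Icc_cast (n : ℕ) : ∑ x ∈ Finset.Icc (-(n:ℤ)) n, (x:ℝ) = 0 := by
  induction n with
  | zero => simp
  | succ n ih =>
    have h1 : ((n+1 : ℕ) : ℤ) = (n:ℤ)+1 := by push_cast; ring
    have h2 : (-((n:ℤ)+1)) ∉ insert ((n:ℤ)+1) (Finset.Icc (-(n:ℤ)) n) := by
      simp only [Finset.mem_insert, Finset.mem_Icc]; omega
    have h3 : ((n:ℤ)+1) ∉ Finset.Icc (-(n:ℤ)) n := by
      simp only [Finset.mem_Icc]; omega
    rw [h1, Icc_succ', Finset.sum_insert h2, Finset.sum_insert h3, ih]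
    push_cast; ring

lemma sum_Icc_sq (n : ℕ) : ∑ x ∈ Finset.Icc (-(n:ℤ)) n, (x:ℝ)^2
    = n*(n+1)*(2*n+1)/3 := by
  induction n with
  | zero => simp
  | succ n ih =>
    have h1 : ((n+1 : ℕ) : ℤ) = (n:ℤ)+1 := by push_cast; ring
    have h2 : (-((n:ℤ)+1)) ∉ insert ((n:ℤ)+1) (Finset.Icc (-(n:ℤ)) n) := by
      simp only [Finset.mem_insert, Finset.mem_Icc]; omega
    have h3 : ((n:ℤ)+1) ∉ Finset.Icc (-(n:ℤ)) n := by
      simp only [Finset.mem_Icc]; omega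
    rw [h1, Icc_succ', Finset.sum_insert h2, Finset.sum_insert h3, ih]
    push_cast; ring

/-- If `E₁, …, E_{2k}` are independent random variables, each uniform on
`Z_{±r}`, and `Ȳ = (1/k)(E₁ + ⋯ + E_{2k})`, then
`Pr(|Ȳ| < 1/2) ≥ 1 - 8r(r+1)/(3k)`. -/
theorem stmt10 {Ω : Type*} [MeasurableSpace Ω] (μ : Measure Ω) [IsProbabilityMeasure μ]
    (r k : ℕ) (hr : 1 ≤ r) (hk : 1 ≤ k)
    (E : Fin (2 * k) → Ω → ℤ)
    (hmeas : ∀ i, Measurable (E i))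
    (hindep : iIndepFun E μ)
    (hunif : ∀ i, ∀ x : ℤ, μ {ω | E i ω = x} =
      if x ∈ Finset.Icc (-(r : ℤ)) r then (1 : ℝ≥0∞) / (2 * (r : ℝ≥0∞) + 1) else 0) :
    (μ {ω | |(∑ i, (E i ω : ℝ)) / (k : ℝ)| < 1 / 2}).toReal
      ≥ 1 - 8 * (r : ℝ) * ((r : ℝ) + 1) / (3 * (k : ℝ)) := by
  classical
  have hkR : (0:ℝ) < k := by exact_mod_cast hk
  have hrR : (0:ℝ) < 2*(r:ℝ)+1 := by positivity
  set s : Finset ℤ := Finset.Icc (-(r:ℤ)) r with hs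
  set c : ℝ≥0∞ := 2 * (r : ℝ≥0∞) + 1 with hc
  have hc0 : c ≠ 0 := by simp [hc]
  have hctop : c ≠ ∞ := by simp [hc]; finiteness
  have hcto : c.toReal = 2*(r:ℝ)+1 := by
    rw [hc]; rw [ENNReal.toReal_add (by finiteness) (by finiteness)]; simp
  set ν : Measure ℤ := c⁻¹ • ∑ x ∈ s, Measure.dirac x with hν
  have mcast : Measurable (fun z : ℤ => (z:ℝ)) := measurable_from_top
  -- the law of each E i
  have hmap : ∀ i, μ.map (E i) = ν := by
    intro i
    apply MeasureTheory.Measure.ext_of_singleton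
    intro a
    rw [Measure.map_apply (hmeas i) (measurableSet_singleton a)]
    have h1 : E i ⁻¹' {a} = {ω | E i ω = a} := rfl
    rw [h1, hunif i a, hν, Measure.smul_apply, Measure.finset_sum_apply]
    simp only [Measure.dirac_apply' _ (measurableSet_singleton a)]
    by_cases ha : a ∈ s
    · rw [if_pos ha]
      rw [Finset.sum_eq_single a]
      · simp [one_div]
      · intro b _ hb; simp [Set.indicator, hb]
      · intro h; exact absurd ha h
    · rw [if_neg ha]
      rw [Finset.sum_eq_zero]
      · simp
      · intro b hb
        have : b ≠ a := fun h => ha (h ▸ hb)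
        simp [Set.indicator, this]
  -- integrals of functions of E i
  have hint : ∀ (i) (g : ℤ → ℝ), ∫ ω, g (E i ω) ∂μ = (∑ x ∈ s, g x) / (2*(r:ℝ)+1) := by
    intro i g
    have hg : Measurable g := measurable_from_top
    rw [← integral_map (hmeas i).aemeasurable (hg.aestronglyMeasurable), hmap i, hν,
      integral_smul_measure,
      integral_finset_sum_measure (fun x _ =>
        ⟨hg.aestronglyMeasurable, by simp [HasFiniteIntegral, lintegral_dirac]⟩)]
    simp only [integral_dirac, ENNReal.toReal_inv, hcto, smul_eq_mul]
    rw [inv_mul_eq_div]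
  set X : Fin (2*k) → Ω → ℝ := fun i ω => (E i ω : ℝ) with hX
  have hXmeas : ∀ i, Measurable (X i) := fun i => mcast.comp (hmeas i)
  -- mean and second moment
  have hmean : ∀ i, ∫ ω, X i ω ∂μ = 0 := by
    intro i
    rw [hX]
    have := hint i (fun z => (z:ℝ))
    rw [this, hs, sum_Icc_cast, zero_div]
  have hsq : ∀ i, ∫ ω, (X i ω)^2 ∂μ = (r:ℝ)*((r:ℝ)+1)/3 := by
    intro i
    have := hint i (fun z => ((z:ℝ))^2)
    rw [hX]; simp only
    rw [this, hs, sum_Icc_sq]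
    field_simp
  -- a.e. boundedness
  have hbound : ∀ i, ∀ᵐ ω ∂μ, E i ω ∈ s := by
    intro i
    have hms : MeasurableSet ((↑s : Set ℤ))ᶜ := (s.measurableSet).compl
    have : μ {ω | E i ω ∉ s} = 0 := by
      have h1 : {ω | E i ω ∉ s} = E i ⁻¹' ((↑s : Set ℤ))ᶜ := by
        ext ω; simp
      rw [h1, ← Measure.map_apply (hmeas i) hms, hmap i, hν, Measure.smul_apply,
        Measure.finset_sum_apply]
      rw [Finset.sum_eq_zero]
      · simp
      · intro b hb
        rw [Measure.dirac_apply' _ hms]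
        simp [Set.indicator, hb]
    exact (ae_iff).2 (by convert this using 2)
  have hmem : ∀ i, MemLp (X i) 2 μ := by
    intro i
    refine MemLp.of_bound (hXmeas i).aestronglyMeasurable (r:ℝ) ?_
    filter_upwards [hbound i] with ω hω
    rw [hs, Finset.mem_Icc] at hω
    rw [hX]; simp only [Real.norm_eq_abs]
    rw [abs_le]
    constructor <;> · exact_mod_cast (by omega : _)
  -- variance of each X i
  have hvar : ∀ i, variance (X i) μ = (r:ℝ)*((r:ℝ)+1)/3 := by
    intro i
    rw [variance_eq_sub (hmem i)]
    have h1 : μ[(X i)^2] = ∫ ω, (X i ω)^2 ∂μ := by rfl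
    rw [h1, hsq i, hmean i]
    ring
  -- the sum
  set S : Ω → ℝ := ∑ i, X i with hS
  have hSfun : S = fun ω => ∑ i, X i ω := by
    funext ω; rw [hS]; simp
  have hSapp : ∀ ω, S ω = ∑ i, X i ω := fun ω => by rw [hSfun]
  have hSmeas : Measurable S := by
    rw [hSfun]; exact Finset.measurable_sum _ (fun i _ => hXmeas i)
  have hSmem : MemLp S 2 μ := memLp_finset_sum' _ (fun i _ => hmem i)
  have hSmean : μ[S] = 0 := by
    rw [hSfun, integral_finset_sum _ (fun i _ => (hmem i).integrable one_le_two)]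
    simp [hmean]
  have hSvar : variance S μ = 2*(k:ℝ)*((r:ℝ)*((r:ℝ)+1)/3) := by
    rw [hS, IndepFun.variance_sum (fun i _ => hmem i)
      (fun i _ j _ hij => (hindep.indepFun hij).comp mcast mcast)]
    simp only [hvar, Finset.sum_const, Finset.card_univ, Fintype.card_fin, nsmul_eq_mul]
    push_cast; ring
  -- Chebyshev
  have hcheb := meas_ge_le_variance_div_sq (μ := μ) hSmem
    (c := (k:ℝ)/2) (by positivity)
  set B : Set Ω := {ω | (k:ℝ)/2 ≤ |S ω - μ[S]|} with hB
  have hBmeas : MeasurableSet B := by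
    rw [hB]
    exact measurableSet_le measurable_const ((hSmeas.sub measurable_const).abs)
  have hGB : {ω | |(∑ i, (E i ω : ℝ)) / (k : ℝ)| < 1 / 2} = Bᶜ := by
    ext ω
    rw [hB]
    simp only [Set.mem_setOf_eq, Set.mem_compl_iff, not_le]
    rw [hSmean, sub_zero, hSapp, abs_div, abs_of_pos hkR, div_lt_iff₀ hkR]
    constructor <;> intro h <;> linarith
  have hbd : variance S μ / ((k:ℝ)/2)^2 = 8*(r:ℝ)*((r:ℝ)+1)/(3*(k:ℝ)) := by
    rw [hSvar]; field_simp; ring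
  rw [hGB, prob_compl_eq_one_sub hBmeas,
    ENNReal.toReal_sub_of_le prob_le_one ENNReal.one_ne_top, ENNReal.toReal_one]
  have hμB : (μ B).toReal ≤ 8*(r:ℝ)*((r:ℝ)+1)/(3*(k:ℝ)) := by
    have h1 : μ B ≤ ENNReal.ofReal (8*(r:ℝ)*((r:ℝ)+1)/(3*(k:ℝ))) := by
      rw [← hbd]; exact hcheb
    calc (μ B).toReal ≤ (ENNReal.ofReal (8*(r:ℝ)*((r:ℝ)+1)/(3*(k:ℝ)))).toReal :=
          ENNReal.toReal_mono ENNReal.ofReal_ne_top h1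
      _ = 8*(r:ℝ)*((r:ℝ)+1)/(3*(k:ℝ)) := ENNReal.toReal_ofReal (by positivity)
  linarith
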